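/- Let 1 ≤ p ≤ k ≤ N and set 𝔑_k(p) := s_{i_{p+1}} s_{i_{p+2}} ⋯ s_{i_k} Λ_{i_k} ∈ ℤ^{n+1} (so 𝔑_k(k) = Λ_{i_k}). Extend the residue function by res(i,j) := t−i+j for all i, j ≥ 0, and read all Λ-indices with the convention that indices 0 and n+1 give the class 0. Then in the quotient group ℤ^{n+1}/ℤ·(1,1,…,1): if j^p < j^k, 𝔑_k(p) ≡ Λ_{res(i^k,0)} − Λ_{res(i^p,0)} + Λ_{res(i^p,j^p)} − Λ_{res(i^p−1,j^p)} + Λ_{res(i^p−1,j^k)}, and if j^p ≥ j^k, 𝔑_k(p) ≡ Λ_{res(i^k,0)} − Λ_{res(i^p,0)} + Λ_{res(i^p,j^k)}. -/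
import Mathlib


namespace Stmt5

/-- Row index (1-indexed) of the box labeled `p` in the `t × U` rectangle
(boxes are labeled `1, …, t·U` row by row). -/
def ibox (U p : ℕ) : ℕ := (p - 1) / U + 1

/-- Column index (1-indexed) of the box labeled `p`. -/
def jbox (U p : ℕ) : ℕ := (p - 1) % U + 1

/-- The residue `res(i,j) = t - i + j` (as a natural number, valid when `i ≤ t + j`). -/
def res (t i j : ℕ) : ℕ := t + j - i

/-- The word `i_p = res(i^p, j^p)`. -/
def iword (t U p : ℕ) : ℕ := res t (ibox U p) (jbox U p)

/-- `Λ_m = e_1 + ⋯ + e_m` of `ℤ^{n+1}`, as a vector with 1-indexed coordinates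
(`Λ_0 = 0`, and indices `≥ n+1` cap at the all-ones vector). -/
def Lam (m : ℕ) : ℕ → ℤ := fun x => if 1 ≤ x ∧ x ≤ m then 1 else 0

/-- The simple reflection `s_r` of `S_{n+1}` acting on vectors by exchanging the
`r`-th and `(r+1)`-st coordinates. -/
def sAct (r : ℕ) (v : ℕ → ℤ) : ℕ → ℤ := fun x =>
  if x = r then v (r + 1) else if x = r + 1 then v r else v x

/-- Apply a sequence of simple reflections, leftmost outermost. -/
def applySeq : List ℕ → (ℕ → ℤ) → ℕ → ℤ
  | [], v => v
  | r :: rs, v => sAct r (applySeq rs v)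

/-- `𝔑_k(p) = s_{i_{p+1}} s_{i_{p+2}} ⋯ s_{i_k} Λ_{i_k}`. -/
def Nfrak (t U p k : ℕ) : ℕ → ℤ :=
  applySeq ((List.range (k - p)).map fun a => iword t U (p + 1 + a)) (Lam (iword t U k))

/-- The all-ones vector `(1, …, 1) ∈ ℤ^{n+1}`. -/
def allOnes (n : ℕ) : ℕ → ℤ := fun x => if 1 ≤ x ∧ x ≤ n + 1 then 1 else 0

/-- Explicit indicator-vector form of `𝔑_k(p)`. -/
def Fv (t ip jp ik jk : ℕ) : ℕ → ℤ := fun x =>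
  if (1 ≤ x ∧ x ≤ t - ik) ∨ (t - ip < x ∧ x ≤ t - ip + min jp jk) ∨
      (t - ip + jp + 1 < x ∧ x ≤ t - ip + 1 + jk) then 1 else 0

lemma step_same (t ip jp ik jk : ℕ) (h1 : 1 ≤ ip) (h2 : ip ≤ ik) (h3 : ik ≤ t)
    (h4 : 1 ≤ jp) (h5 : 1 ≤ jk) :
    sAct (t - ip + jp + 1) (Fv t ip (jp + 1) ik jk) = Fv t ip jp ik jk := by
  funext x
  simp only [sAct, Fv]
  split_ifs <;> omega

lemma step_row (t ip ik jk U : ℕ) (h1 : 1 ≤ ip) (h2 : ip + 1 ≤ ik) (h3 : ik ≤ t)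
    (h5 : 1 ≤ jk) (h6 : jk ≤ U) :
    sAct (t - ip) (Fv t (ip + 1) 1 ik jk) = Fv t ip U ik jk := by
  funext x
  simp only [sAct, Fv]
  split_ifs <;> omega

lemma box_spec (U p : ℕ) (hU : 1 ≤ U) :
    ∃ a b, ibox U p = a + 1 ∧ jbox U p = b + 1 ∧ p - 1 = U * a + b ∧ b < U :=
  ⟨(p - 1) / U, (p - 1) % U, rfl, rfl, (Nat.div_add_mod _ _).symm, Nat.mod_lt _ hU⟩

lemma ibox_mono (U p k : ℕ) (h : p ≤ k) : ibox U p ≤ ibox U k := by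
  unfold ibox
  have := Nat.div_le_div_right (c := U) (show p - 1 ≤ k - 1 by omega)
  omega

lemma ibox_le (t U p : ℕ) (hU : 1 ≤ U) (hp : 1 ≤ p) (h : p ≤ t * U) : ibox U p ≤ t := by
  unfold ibox
  have h2 : p - 1 < t * U := Nat.lt_of_lt_of_le (Nat.sub_lt hp one_pos) h
  have h3 : (p - 1) / U < t := (Nat.div_lt_iff_lt_mul hU).2 h2
  omega

lemma box_step (U p : ℕ) (hU : 1 ≤ U) (hp : 1 ≤ p) :
    (jbox U p < U → ibox U (p + 1) = ibox U p ∧ jbox U (p + 1) = jbox U p + 1) ∧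
    (jbox U p = U → ibox U (p + 1) = ibox U p + 1 ∧ jbox U (p + 1) = 1) := by
  have hq : p + 1 - 1 = (p - 1) + 1 := by omega
  have hmod : (p - 1) % U < U := Nat.mod_lt _ hU
  have hdm := Nat.div_add_mod (p - 1) U
  unfold ibox jbox
  rw [hq]
  by_cases hcase : (p - 1) % U + 1 < U
  · have e1 : (p - 1) + 1 = ((p - 1) % U + 1) + U * ((p - 1) / U) := by omega
    have e2 : ((p - 1) + 1) % U = (p - 1) % U + 1 := by
      rw [e1, Nat.add_mul_mod_self_left, Nat.mod_eq_of_lt hcase]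
    have e3 : ((p - 1) + 1) / U = (p - 1) / U := by
      rw [e1, Nat.add_mul_div_left _ _ (show 0 < U by omega), Nat.div_eq_of_lt hcase]; omega
    exact ⟨fun _ => by omega, fun h => by omega⟩
  · have hU1 : (p - 1) % U + 1 = U := by omega
    have e1 : (p - 1) + 1 = U * ((p - 1) / U + 1) := by
      rw [Nat.mul_add, Nat.mul_one]; omega
    have e2 : ((p - 1) + 1) % U = 0 := by rw [e1]; exact Nat.mul_mod_right _ _
    have e3 : ((p - 1) + 1) / U = (p - 1) / U + 1 := by
      rw [e1]; exact Nat.mul_div_cancel_left _ (by omega)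
    exact ⟨fun h => by omega, fun _ => by omega⟩

lemma Nfrak_succ (t U p d : ℕ) :
    Nfrak t U p (p + d + 1) = sAct (iword t U (p + 1)) (Nfrak t U (p + 1) (p + 1 + d)) := by
  unfold Nfrak
  rw [show p + d + 1 - p = d + 1 by omega, show p + 1 + d - (p + 1) = d by omega,
      show p + 1 + d = p + d + 1 by omega, List.range_succ_eq_map, List.map_cons,
      List.map_map]
  show applySeq _ _ = _
  rw [applySeq]
  have hf : ((fun a => iword t U (p + 1 + a)) ∘ Nat.succ) =
      (fun a => iword t U (p + 1 + 1 + a)) := by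
    funext a
    simp only [Function.comp_apply]
    congr 1
    omega
  rw [hf, show p + 1 + 0 = p + 1 from rfl]

lemma main_aux (t U : ℕ) (hU : 1 ≤ U) : ∀ d p, 1 ≤ p → p + d ≤ t * U →
    Nfrak t U p (p + d) =
      Fv t (ibox U p) (jbox U p) (ibox U (p + d)) (jbox U (p + d)) := by
  intro d
  induction d with
  | zero =>
    intro p hp hk
    simp only [Nat.add_zero] at *
    have hNf : Nfrak t U p p = Lam (iword t U p) := by
      unfold Nfrak
      simp [applySeq]
    rw [hNf]
    obtain ⟨a, b, ha, hb, hab, hbU⟩ := box_spec U p hU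
    have hit : ibox U p ≤ t := ibox_le t U p hU hp hk
    funext x
    simp only [Lam, Fv, iword, res]
    split_ifs <;> omega
  | succ d ih =>
    intro p hp hk
    have hk1 : p + 1 + d ≤ t * U := le_trans (by omega) hk
    have hknorm : p + (d + 1) = p + d + 1 := by omega
    rw [hknorm, Nfrak_succ, ih (p + 1) (by omega) hk1,
        show p + 1 + d = p + d + 1 by omega]
    obtain ⟨a, b, ha, hb, hab, hbU⟩ := box_spec U p hU
    obtain ⟨a', b', ha', hb', hab', hbU'⟩ := box_spec U (p + d + 1) hU
    have hikt : ibox U (p + d + 1) ≤ t := ibox_le t U (p + d + 1) hU (by omega) (le_trans (by omega) hk)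
    by_cases hlt : jbox U p < U
    · obtain ⟨hi, hj⟩ := (box_step U p hU hp).1 hlt
      have hmono : ibox U p ≤ ibox U (p + d + 1) := ibox_mono U p (p + d + 1) (by omega)
      rw [hi, hj, show iword t U (p + 1) = t - ibox U p + jbox U p + 1 by
        unfold iword res; rw [hi, hj]; omega]
      exact step_same t (ibox U p) (jbox U p) (ibox U (p + d + 1)) (jbox U (p + d + 1))
        (by omega) hmono hikt (by omega) (by omega)
    · have heq : jbox U p = U := by omega
      obtain ⟨hi, hj⟩ := (box_step U p hU hp).2 heq
      have hmono : ibox U (p + 1) ≤ ibox U (p + d + 1) := ibox_mono U (p + 1) (p + d + 1) (by omega)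
      rw [hi] at hmono
      rw [hi, hj, heq, show iword t U (p + 1) = t - ibox U p by
        unfold iword res; rw [hi, hj]; omega]
      exact step_row t (ibox U p) (ibox U (p + d + 1)) (jbox U (p + d + 1)) U
        (by omega) hmono hikt (by omega) (by omega)


theorem stmt5 (n t : ℕ) (hn : 1 ≤ n) (ht1 : 1 ≤ t) (htn : t ≤ n) (p k : ℕ)
    (hp : 1 ≤ p) (hpk : p ≤ k) (hk : k ≤ t * (n - t + 1)) :
    (jbox (n - t + 1) p < jbox (n - t + 1) k →
      ∃ c : ℤ, Nfrak t (n - t + 1) p k =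
        Lam (res t (ibox (n - t + 1) k) 0) - Lam (res t (ibox (n - t + 1) p) 0)
          + Lam (res t (ibox (n - t + 1) p) (jbox (n - t + 1) p))
          - Lam (res t (ibox (n - t + 1) p - 1) (jbox (n - t + 1) p))
          + Lam (res t (ibox (n - t + 1) p - 1) (jbox (n - t + 1) k))
          + c • allOnes n) ∧
    (jbox (n - t + 1) k ≤ jbox (n - t + 1) p →
      ∃ c : ℤ, Nfrak t (n - t + 1) p k =
        Lam (res t (ibox (n - t + 1) k) 0) - Lam (res t (ibox (n - t + 1) p) 0)
          + Lam (res t (ibox (n - t + 1) p) (jbox (n - t + 1) k))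
          + c • allOnes n) := by
  have hU : 1 ≤ n - t + 1 := by omega
  have hmain : Nfrak t (n - t + 1) p k =
      Fv t (ibox (n - t + 1) p) (jbox (n - t + 1) p) (ibox (n - t + 1) k) (jbox (n - t + 1) k) := by
    obtain ⟨d, rfl⟩ : ∃ d, k = p + d := ⟨k - p, by omega⟩
    exact main_aux t (n - t + 1) hU d p hp hk
  obtain ⟨a, b, ha, hb, hab, hbU⟩ := box_spec (n - t + 1) p hU
  obtain ⟨a', b', ha', hb', hab', hbU'⟩ := box_spec (n - t + 1) k hU
  have hikt : ibox (n - t + 1) k ≤ t := ibox_le t (n - t + 1) k hU (by omega) hk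
  have hmono : ibox (n - t + 1) p ≤ ibox (n - t + 1) k := ibox_mono _ p k hpk
  constructor
  · intro hlt
    refine ⟨0, ?_⟩
    rw [hmain]
    funext x
    simp only [Fv, Lam, res, Pi.add_apply, Pi.sub_apply, Pi.smul_apply, smul_eq_mul,
      zero_mul, add_zero]
    split_ifs <;> omega
  · intro hle
    refine ⟨0, ?_⟩
    rw [hmain]
    funext x
    simp only [Fv, Lam, res, Pi.add_apply, Pi.sub_apply, Pi.smul_apply, smul_eq_mul,
      zero_mul, add_zero]
    split_ifs <;> omega

end Stmt5
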